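/- For every integer n ≥ 3 there exists a polynomial P with integer coefficients such that for every finite field F of cardinality q, the number of symmetric (n−1)×(n−1) matrices M over F with det M = 0 equals P(q). (This is the point-counting form of Proposition 4.1: the class of the dual graph hypersurface of the complete graph K_n lies in ℤ[𝔸¹].) -/

import Mathlib

/-!
STATEMENT 1 (point-counting form of Proposition 4.1):
For every integer `n ≥ 3` there exists a polynomial `P` with integer coefficients such that
for every finite field `F` of cardinality `q`, the number of symmetric `(n−1)×(n−1)`
matrices `M` over `F` with `det M = 0` equals `P(q)`.
-/

open scoped Classical


open Polynomial

noncomputable def ipoly (a k : ℕ) : Polynomial ℤ :=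
  ∏ i ∈ Finset.range k, ((X : Polynomial ℤ) ^ a - X ^ i)

noncomputable def gbin : ℕ → ℕ → Polynomial ℤ
  | _, 0 => 1
  | 0, _ + 1 => 0
  | m + 1, r + 1 => gbin m (r + 1) + X ^ (m - r) * gbin m r

lemma ipoly_zero (a : ℕ) : ipoly a 0 = 1 := Finset.prod_range_zero _

lemma ipoly_succ (a k : ℕ) : ipoly a (k + 1) = ipoly a k * (X ^ a - X ^ k) :=
  Finset.prod_range_succ _ _

lemma ipoly_eq_zero {a k : ℕ} (h : a < k) : ipoly a k = 0 :=
  Finset.prod_eq_zero (Finset.mem_range.mpr h) (sub_self _)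

lemma ipoly_shift (a k : ℕ) :
    ipoly (a + 1) (k + 1) = (X ^ (a + 1) - 1) * (X ^ k * ipoly a k) := by
  rw [ipoly, Finset.prod_range_succ']
  have h1 : ∀ i ∈ Finset.range k,
      ((X : Polynomial ℤ) ^ (a + 1) - X ^ (i + 1)) = X * (X ^ a - X ^ i) := by
    intro i _; ring
  rw [Finset.prod_congr rfl h1, Finset.prod_mul_distrib, Finset.prod_const, Finset.card_range, ipoly]
  ring

lemma gbin_zero_right (m : ℕ) : gbin m 0 = 1 := by cases m <;> rfl

lemma gbin_eq_zero : ∀ m r : ℕ, m < r → gbin m r = 0 := by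
  intro m
  induction m with
  | zero =>
    intro r h
    match r, h with
    | r + 1, _ => rfl
  | succ m ih =>
    intro r h
    match r, h with
    | r + 1, h =>
      show gbin (m + 1) (r + 1) = 0
      rw [gbin, ih (r + 1) (by omega), ih r (by omega)]
      simp

lemma gbin_mul_ipoly : ∀ m r : ℕ, gbin m r * ipoly r r = ipoly m r := by
  intro m
  induction m with
  | zero =>
    intro r
    cases r with
    | zero => simp [gbin, ipoly]
    | succ r => rw [show gbin 0 (r+1) = 0 from rfl, ipoly_eq_zero (Nat.succ_pos r), zero_mul]
  | succ m ih =>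
    intro r
    cases r with
    | zero => rw [gbin_zero_right, ipoly_zero, one_mul, ipoly_zero]
    | succ r =>
      by_cases hr : r ≤ m
      · have e1 := ih (r + 1)
        have e2 := ih r
        have hX : (X : Polynomial ℤ) ^ (m - r) * X ^ r = X ^ m := by
          rw [← pow_add, Nat.sub_add_cancel hr]
        rw [gbin, ipoly_shift r r, ipoly_shift m r]
        rw [ipoly_shift r r, ipoly_succ m r] at e1
        linear_combination e1 + (X : Polynomial ℤ) ^ (m - r) * (X ^ (r + 1) - 1) * X ^ r * e2 +
          (X ^ (r + 1) - 1) * ipoly m r * hX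
      · push_neg at hr
        rw [gbin, gbin_eq_zero m (r + 1) (by omega), gbin_eq_zero m r hr,
          ipoly_eq_zero (show m + 1 < r + 1 by omega)]
        simp


open Matrix LinearMap
open scoped Classical
set_option linter.unusedSectionVars false

variable {F : Type} [Field F] [Fintype F]

lemma matrix_ext_mulVecLin {a b : ℕ} {A B : Matrix (Fin a) (Fin b) F}
    (h : A.mulVecLin = B.mulVecLin) : A = B :=
  Matrix.toLin'.injective (by rw [Matrix.toLin'_apply', Matrix.toLin'_apply', h])

lemma isUnit_of_inj {a : ℕ} {A : Matrix (Fin a) (Fin a) F}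
    (h : Function.Injective A.mulVecLin) : IsUnit A :=
  mulVec_injective_iff_isUnit.mp (by rwa [← coe_mulVecLin])

lemma inj_of_isUnit {a : ℕ} {A : Matrix (Fin a) (Fin a) F}
    (h : IsUnit A) : Function.Injective A.mulVecLin := by
  rw [coe_mulVecLin]; exact mulVec_injective_iff_isUnit.mpr h

lemma rank_eq_iff_det {a : ℕ} (A : Matrix (Fin a) (Fin a) F) : A.rank = a ↔ A.det ≠ 0 := by
  constructor
  · intro h
    have hr : Module.finrank F (LinearMap.range A.mulVecLin) = a := h
    have htop : LinearMap.range A.mulVecLin = ⊤ :=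
      Submodule.eq_top_of_finrank_eq (by simp [hr])
    have hsurj : Function.Surjective A.mulVec := by
      rw [← coe_mulVecLin]; exact LinearMap.range_eq_top.mp htop
    have : IsUnit A := mulVec_surjective_iff_isUnit.mp hsurj
    exact IsUnit.ne_zero (A.isUnit_iff_isUnit_det.mp this)
  · intro h
    have : IsUnit A := A.isUnit_iff_isUnit_det.mpr (isUnit_iff_ne_zero.mpr h)
    simpa using Matrix.rank_of_isUnit A this


lemma absorb {m r a : ℕ} {B : Matrix (Fin m) (Fin r) F} {L : Matrix (Fin r) (Fin m) F}
    {M : Matrix (Fin m) (Fin a) F} (hL : L * B = 1)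
    (hsub : LinearMap.range M.mulVecLin ≤ LinearMap.range B.mulVecLin) :
    B * (L * M) = M := by
  apply matrix_ext_mulVecLin (F := F)
  refine LinearMap.ext fun v => ?_
  have hv : M.mulVecLin v ∈ LinearMap.range B.mulVecLin := hsub (LinearMap.mem_range_self _ v)
  obtain ⟨y, hy⟩ := hv
  simp only [mulVecLin_apply] at hy ⊢
  rw [← Matrix.mulVec_mulVec, ← Matrix.mulVec_mulVec, ← hy, Matrix.mulVec_mulVec]
  rw [Matrix.mulVec_mulVec, Matrix.mul_assoc, hL, Matrix.mul_one]

lemma surj_transpose {m r : ℕ} {B : Matrix (Fin m) (Fin r) F}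
    (hB : Function.Injective B.mulVecLin) :
    LinearMap.range Bᵀ.mulVecLin = ⊤ := by
  apply Submodule.eq_top_of_finrank_eq
  have h1 : Bᵀ.rank = B.rank := Matrix.rank_transpose B
  have h2 : B.rank = r := by
    rw [Matrix.rank, LinearMap.finrank_range_of_inj hB]
    simp
  have : Module.finrank F (LinearMap.range Bᵀ.mulVecLin) = Bᵀ.rank := rfl
  rw [this, h1, h2]
  simp

lemma range_BSBt {m r : ℕ} {B : Matrix (Fin m) (Fin r) F} {S : Matrix (Fin r) (Fin r) F}
    (hB : Function.Injective B.mulVecLin) (hS : S.det ≠ 0) :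
    LinearMap.range (B * S * Bᵀ).mulVecLin = LinearMap.range B.mulVecLin := by
  have hSu : IsUnit S := S.isUnit_iff_isUnit_det.mpr (isUnit_iff_ne_zero.mpr hS)
  have hSsurj : LinearMap.range S.mulVecLin = ⊤ := by
    rw [LinearMap.range_eq_top, coe_mulVecLin]
    exact mulVec_surjective_iff_isUnit.mpr hSu
  rw [Matrix.mul_assoc, Matrix.mulVecLin_mul, LinearMap.range_comp, Matrix.mulVecLin_mul,
    LinearMap.range_comp, surj_transpose hB, Submodule.map_top, hSsurj, Submodule.map_top]

lemma rank_BSBt {m r : ℕ} {B : Matrix (Fin m) (Fin r) F} {S : Matrix (Fin r) (Fin r) F}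
    (hB : Function.Injective B.mulVecLin) (hS : S.det ≠ 0) :
    (B * S * Bᵀ).rank = r := by
  rw [Matrix.rank, range_BSBt hB hS, ← Matrix.rank, Matrix.rank, LinearMap.finrank_range_of_inj hB]
  simp
lemma exists_decomp {m r : ℕ} (M : Matrix (Fin m) (Fin m) F) (hs : M.IsSymm) (hr : M.rank = r) :
    ∃ (B : Matrix (Fin m) (Fin r) F) (S : Matrix (Fin r) (Fin r) F) (L : Matrix (Fin r) (Fin m) F),
      Function.Injective B.mulVecLin ∧ S.IsSymm ∧ S.det ≠ 0 ∧ B * S * Bᵀ = M ∧ L * B = 1 ∧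
      LinearMap.range B.mulVecLin = LinearMap.range M.mulVecLin := by
  classical
  have hV : Module.finrank F (LinearMap.range M.mulVecLin) = r := hr
  let b : Module.Basis (Fin r) F (LinearMap.range M.mulVecLin) := Module.finBasisOfFinrankEq F _ hV
  let ℓ : (Fin r → F) →ₗ[F] (Fin m → F) :=
    (LinearMap.range M.mulVecLin).subtype.comp (b.equivFun.symm : (Fin r → F) ≃ₗ[F] _).toLinearMap
  have hinj : Function.Injective ℓ :=
    (Submodule.injective_subtype _).comp b.equivFun.symm.injective
  have hrangeℓ : LinearMap.range ℓ = LinearMap.range M.mulVecLin := by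
    rw [LinearMap.range_comp, LinearEquiv.range, Submodule.map_top, Submodule.range_subtype]
  set B : Matrix (Fin m) (Fin r) F := LinearMap.toMatrix' ℓ with hBdef
  have hB : B.mulVecLin = ℓ := by
    rw [← Matrix.toLin'_apply', hBdef, Matrix.toLin'_toMatrix']
  obtain ⟨g, hg⟩ := ℓ.exists_leftInverse_of_injective (LinearMap.ker_eq_bot.mpr hinj)
  set L : Matrix (Fin r) (Fin m) F := LinearMap.toMatrix' g with hLdef
  have hLB : L * B = 1 := by
    rw [hLdef, hBdef, ← LinearMap.toMatrix'_comp, hg, LinearMap.toMatrix'_id]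
  have hBinj : Function.Injective B.mulVecLin := by rw [hB]; exact hinj
  have hBrange : LinearMap.range B.mulVecLin = LinearMap.range M.mulVecLin := by
    rw [hB, hrangeℓ]
  have hsub : LinearMap.range M.mulVecLin ≤ LinearMap.range B.mulVecLin := hBrange.ge
  have habs : B * (L * M) = M := absorb hLB hsub
  set S : Matrix (Fin r) (Fin r) F := L * M * Lᵀ with hSdef
  have hSsymm : S.IsSymm := by
    rw [Matrix.IsSymm, hSdef, Matrix.transpose_mul, Matrix.transpose_mul,
      Matrix.transpose_transpose, hs, Matrix.mul_assoc]
  have hBSBt : B * S * Bᵀ = M := by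
    have h1 : B * S * Bᵀ = (B * (L * M)) * Lᵀ * Bᵀ := by
      rw [hSdef]; simp only [Matrix.mul_assoc]
    have h2 : (M * Lᵀ * Bᵀ)ᵀ = M := by
      have hMt : Mᵀ = M := hs
      simp only [Matrix.transpose_mul, Matrix.transpose_transpose]
      rw [hMt, habs]
    rw [h1, habs, ← Matrix.transpose_transpose (M * Lᵀ * Bᵀ), h2, hs]
  have hSdet : S.det ≠ 0 := by
    rw [← rank_eq_iff_det]
    have hle : S.rank ≤ r := Matrix.rank_le_width S
    have hge : r ≤ S.rank := by
      calc r = M.rank := hr.symm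
      _ = (B * S * Bᵀ).rank := by rw [hBSBt]
      _ ≤ (S * Bᵀ).rank := by rw [Matrix.mul_assoc]; exact Matrix.rank_mul_le_right _ _
      _ ≤ S.rank := Matrix.rank_mul_le_left _ _
    omega
  exact ⟨B, S, L, hBinj, hSsymm, hSdet, hBSBt, hLB, hBrange⟩
lemma isSymm_BSBt {m r : ℕ} {B : Matrix (Fin m) (Fin r) F} {S : Matrix (Fin r) (Fin r) F}
    (hS : S.IsSymm) : (B * S * Bᵀ).IsSymm := by
  have hSt : Sᵀ = S := hS
  rw [Matrix.IsSymm]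
  simp only [Matrix.transpose_mul, Matrix.transpose_transpose, hSt, Matrix.mul_assoc]

lemma cancel₀ {m r : ℕ} {B₀ : Matrix (Fin m) (Fin r) F} {L₀ : Matrix (Fin r) (Fin m) F}
    (hL₀ : L₀ * B₀ = 1) {X Y : Matrix (Fin r) (Fin r) F}
    (h : B₀ * X * B₀ᵀ = B₀ * Y * B₀ᵀ) : X = Y := by
  have hT : B₀ᵀ * L₀ᵀ = 1 := by rw [← Matrix.transpose_mul, hL₀, Matrix.transpose_one]
  calc X = L₀ * B₀ * X * (B₀ᵀ * L₀ᵀ) := by rw [hL₀, hT, Matrix.one_mul, Matrix.mul_one]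
  _ = L₀ * (B₀ * X * B₀ᵀ) * L₀ᵀ := by simp only [Matrix.mul_assoc]
  _ = L₀ * (B₀ * Y * B₀ᵀ) * L₀ᵀ := by rw [h]
  _ = L₀ * B₀ * Y * (B₀ᵀ * L₀ᵀ) := by simp only [Matrix.mul_assoc]
  _ = Y := by rw [hL₀, hT, Matrix.one_mul, Matrix.mul_one]

lemma inj_L_mul {m r : ℕ} {B₀ B : Matrix (Fin m) (Fin r) F} {L₀ : Matrix (Fin r) (Fin m) F}
    (hL₀ : L₀ * B₀ = 1) (hB : Function.Injective B.mulVecLin)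
    (hran : LinearMap.range B.mulVecLin ≤ LinearMap.range B₀.mulVecLin) :
    Function.Injective (L₀ * B).mulVecLin := by
  have habs : B₀ * (L₀ * B) = B := absorb hL₀ hran
  intro x y hxy
  apply hB
  have h2 : B₀.mulVecLin ((L₀ * B).mulVecLin x) = B₀.mulVecLin ((L₀ * B).mulVecLin y) := by
    rw [hxy]
  simp only [mulVecLin_apply, Matrix.mulVec_mulVec, habs] at h2
  simpa only [mulVecLin_apply] using h2

lemma key_count (m r : ℕ) :
    Fintype.card {B : Matrix (Fin m) (Fin r) F // Function.Injective B.mulVecLin} *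
      Fintype.card {S : Matrix (Fin r) (Fin r) F // S.IsSymm ∧ S.det ≠ 0}
    = Fintype.card {M : Matrix (Fin m) (Fin m) F // M.IsSymm ∧ M.rank = r} *
      Fintype.card {A : Matrix (Fin r) (Fin r) F // Function.Injective A.mulVecLin} := by
  classical
  let D := {B : Matrix (Fin m) (Fin r) F // Function.Injective B.mulVecLin} ×
    {S : Matrix (Fin r) (Fin r) F // S.IsSymm ∧ S.det ≠ 0}
  let Φ : D → {M : Matrix (Fin m) (Fin m) F // M.IsSymm ∧ M.rank = r} := fun p =>
    ⟨p.1.1 * p.2.1 * p.1.1ᵀ, ⟨isSymm_BSBt p.2.2.1, rank_BSBt p.1.2 p.2.2.2⟩⟩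
  have hfiber : ∀ M₀ : {M : Matrix (Fin m) (Fin m) F // M.IsSymm ∧ M.rank = r},
      Fintype.card {p : D // Φ p = M₀} =
      Fintype.card {A : Matrix (Fin r) (Fin r) F // Function.Injective A.mulVecLin} := by
    intro M₀
    obtain ⟨B₀, S₀, L₀, hB₀, hS₀symm, hS₀det, hM₀, hL₀, hrange₀⟩ :=
      exists_decomp M₀.1 M₀.2.1 M₀.2.2
    refine (Fintype.card_congr (?_ : {A : Matrix (Fin r) (Fin r) F // Function.Injective A.mulVecLin} ≃ {p : D // Φ p = M₀})).symm
    refine { toFun := ?_, invFun := ?_, left_inv := ?_, right_inv := ?_ }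
    · -- from {A // inj} to fiber
      intro A
      have hAu : IsUnit A.1 := isUnit_of_inj A.2
      have hAdet : A.1.det ≠ 0 := (A.1.isUnit_iff_isUnit_det.mp hAu).ne_zero
      have h1 : A.1 * A.1⁻¹ = 1 := Matrix.mul_nonsing_inv _ (isUnit_iff_ne_zero.mpr hAdet)
      have h1' : A.1⁻¹ * A.1 = 1 := Matrix.nonsing_inv_mul _ (isUnit_iff_ne_zero.mpr hAdet)
      have h2 : A.1⁻¹ᵀ * A.1ᵀ = 1 := by
        rw [← Matrix.transpose_mul, h1, Matrix.transpose_one]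
      have hidet : A.1⁻¹.det ≠ 0 := by
        rw [Matrix.det_nonsing_inv, Ring.inverse_eq_inv']
        exact inv_ne_zero hAdet
      refine ⟨⟨⟨B₀ * A.1, ?_⟩, ⟨A.1⁻¹ * S₀ * A.1⁻¹ᵀ, isSymm_BSBt hS₀symm, ?_⟩⟩, ?_⟩
      · rw [Matrix.mulVecLin_mul]
        exact hB₀.comp (inj_of_isUnit hAu)
      · rw [Matrix.det_mul, Matrix.det_mul, Matrix.det_transpose]
        exact mul_ne_zero (mul_ne_zero hidet hS₀det) hidet
      · apply Subtype.ext
        show B₀ * A.1 * (A.1⁻¹ * S₀ * A.1⁻¹ᵀ) * (B₀ * A.1)ᵀ = M₀.1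
        have key : ∀ a : ℕ, ∀ X : Matrix (Fin r) (Fin a) F, A.1 * (A.1⁻¹ * X) = X := by
          intro a X; rw [← Matrix.mul_assoc, h1, Matrix.one_mul]
        have key2 : ∀ a : ℕ, ∀ X : Matrix (Fin r) (Fin a) F, A.1⁻¹ᵀ * (A.1ᵀ * X) = X := by
          intro a X; rw [← Matrix.mul_assoc, h2, Matrix.one_mul]
        simp only [Matrix.transpose_mul, Matrix.mul_assoc]
        rw [key, key2, ← Matrix.mul_assoc, hM₀]
    · -- from fiber to {A // inj}
      intro p
      have hval : p.1.1.1 * p.1.2.1 * p.1.1.1ᵀ = M₀.1 := congrArg Subtype.val p.2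
      have hran : LinearMap.range p.1.1.1.mulVecLin ≤ LinearMap.range B₀.mulVecLin := by
        rw [hrange₀, ← hval, range_BSBt p.1.1.2 p.1.2.2.2]
      exact ⟨L₀ * p.1.1.1, inj_L_mul hL₀ p.1.1.2 hran⟩
    · -- left inverse
      intro A
      apply Subtype.ext
      show L₀ * (B₀ * A.1) = A.1
      rw [← Matrix.mul_assoc, hL₀, Matrix.one_mul]
    · -- right inverse
      intro p
      have hval : p.1.1.1 * p.1.2.1 * p.1.1.1ᵀ = M₀.1 := congrArg Subtype.val p.2
      set B := p.1.1.1 with hBdef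
      set S := p.1.2.1 with hSdef
      have hran : LinearMap.range B.mulVecLin ≤ LinearMap.range B₀.mulVecLin := by
        rw [hrange₀, ← hval, range_BSBt p.1.1.2 p.1.2.2.2]
      set A := L₀ * B with hAdef
      have habsB : B₀ * A = B := absorb hL₀ hran
      have hAinj : Function.Injective A.mulVecLin := inj_L_mul hL₀ p.1.1.2 hran
      have hAu : IsUnit A := isUnit_of_inj hAinj
      have hAdet : A.det ≠ 0 := (A.isUnit_iff_isUnit_det.mp hAu).ne_zero
      have h1' : A⁻¹ * A = 1 := Matrix.nonsing_inv_mul _ (isUnit_iff_ne_zero.mpr hAdet)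
      have h1 : A * A⁻¹ = 1 := Matrix.mul_nonsing_inv _ (isUnit_iff_ne_zero.mpr hAdet)
      have h2 : Aᵀ * A⁻¹ᵀ = 1 := by
        rw [← Matrix.transpose_mul, h1', Matrix.transpose_one]
      have hS₀eq : A * S * Aᵀ = S₀ := by
        apply cancel₀ hL₀
        calc B₀ * (A * S * Aᵀ) * B₀ᵀ = (B₀ * A) * S * (B₀ * A)ᵀ := by
              simp only [Matrix.transpose_mul, Matrix.mul_assoc]
        _ = M₀.1 := by rw [habsB, hval]
        _ = B₀ * S₀ * B₀ᵀ := hM₀.symm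
      have hSeq : A⁻¹ * S₀ * A⁻¹ᵀ = S := by
        rw [← hS₀eq]
        calc A⁻¹ * (A * S * Aᵀ) * A⁻¹ᵀ = (A⁻¹ * A) * S * (Aᵀ * A⁻¹ᵀ) := by
              simp only [Matrix.mul_assoc]
        _ = S := by rw [h1', h2, Matrix.one_mul, Matrix.mul_one]
      apply Subtype.ext
      apply Prod.ext <;> apply Subtype.ext
      · show B₀ * A = B
        exact habsB
      · show A⁻¹ * S₀ * A⁻¹ᵀ = S
        exact hSeq
  calc Fintype.card {B : Matrix (Fin m) (Fin r) F // Function.Injective B.mulVecLin} *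
      Fintype.card {S : Matrix (Fin r) (Fin r) F // S.IsSymm ∧ S.det ≠ 0}
      = Fintype.card D := (Fintype.card_prod _ _).symm
  _ = Fintype.card ((M₀ : {M : Matrix (Fin m) (Fin m) F // M.IsSymm ∧ M.rank = r}) ×
        {p : D // Φ p = M₀}) := Fintype.card_congr (Equiv.sigmaFiberEquiv Φ).symm
  _ = ∑ M₀ : {M : Matrix (Fin m) (Fin m) F // M.IsSymm ∧ M.rank = r},
        Fintype.card {p : D // Φ p = M₀} := Fintype.card_sigma
  _ = ∑ _M₀ : {M : Matrix (Fin m) (Fin m) F // M.IsSymm ∧ M.rank = r},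
        Fintype.card {A : Matrix (Fin r) (Fin r) F // Function.Injective A.mulVecLin} := by
        exact Finset.sum_congr rfl fun M₀ _ => hfiber M₀
  _ = _ := by rw [Finset.sum_const, Finset.card_univ, smul_eq_mul]
lemma card_inj_matrices {m r : ℕ} (h : r ≤ m) :
    Fintype.card {B : Matrix (Fin m) (Fin r) F // Function.Injective B.mulVecLin}
      = ∏ i : Fin r, (Fintype.card F ^ m - Fintype.card F ^ (i : ℕ)) := by
  classical
  have e : {B : Matrix (Fin m) (Fin r) F // Function.Injective B.mulVecLin} ≃
      {s : Fin r → (Fin m → F) // LinearIndependent F s} := by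
    refine { toFun := fun B => ⟨fun i => B.1ᵀ i, ?_⟩,
             invFun := fun s => ⟨(Matrix.of s.1)ᵀ, ?_⟩,
             left_inv := ?_, right_inv := ?_ }
    · exact Matrix.mulVec_injective_iff.mp (by simpa only [Matrix.coe_mulVecLin] using B.2)
    · rw [Matrix.coe_mulVecLin]
      apply Matrix.mulVec_injective_iff.mpr
      exact s.2
    · intro B; apply Subtype.ext
      show (Matrix.of (fun i => B.1ᵀ i))ᵀ = B.1
      have h1 : Matrix.of (fun i => B.1ᵀ i) = B.1ᵀ := rfl
      rw [h1, Matrix.transpose_transpose]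
    · intro s; apply Subtype.ext; rfl
  rw [Fintype.card_congr e, ← Nat.card_eq_fintype_card, card_linearIndependent (by simpa using h)]
  simp
lemma card_symm (m : ℕ) :
    Fintype.card {M : Matrix (Fin m) (Fin m) F // M.IsSymm}
      = Fintype.card F ^ Nat.choose (m + 1) 2 := by
  classical
  have e : {M : Matrix (Fin m) (Fin m) F // M.IsSymm} ≃ (Sym2 (Fin m) → F) := by
    refine { toFun := fun M s => Sym2.lift ⟨fun i j => M.1 i j, fun i j => ?_⟩ s,
             invFun := fun f => ⟨Matrix.of fun i j => f s(i, j), ?_⟩,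
             left_inv := ?_, right_inv := ?_ }
    · show M.1 i j = M.1 j i
      exact (M.2.apply i j).symm
    · ext i j
      show f s(j, i) = f s(i, j)
      rw [Sym2.eq_swap]
    · intro M; apply Subtype.ext; ext i j; simp
    · intro f; funext s
      induction s using Sym2.ind with
      | _ i j => simp
  rw [Fintype.card_congr e, Fintype.card_fun, Sym2.card, Fintype.card_fin]

lemma card_symm_partition (m : ℕ) :
    Fintype.card {M : Matrix (Fin m) (Fin m) F // M.IsSymm}
      = ∑ r ∈ Finset.range (m + 1),
          Fintype.card {M : Matrix (Fin m) (Fin m) F // M.IsSymm ∧ M.rank = r} := by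
  classical
  rw [Fintype.card_subtype]
  rw [Finset.card_eq_sum_card_fiberwise (f := Matrix.rank) (t := Finset.range (m + 1))
    (fun M _ => Finset.mem_range.mpr (Nat.lt_succ_of_le (Matrix.rank_le_width M)))]
  refine Finset.sum_congr rfl fun r _ => ?_
  rw [Fintype.card_subtype, Finset.filter_filter]

lemma card_symm_det_split (m : ℕ) :
    Fintype.card {M : Matrix (Fin m) (Fin m) F // M.IsSymm}
      = Fintype.card {M : Matrix (Fin m) (Fin m) F // M.IsSymm ∧ M.det = 0}
        + Fintype.card {M : Matrix (Fin m) (Fin m) F // M.IsSymm ∧ M.det ≠ 0} := by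
  classical
  rw [Fintype.card_subtype, Fintype.card_subtype, Fintype.card_subtype,
    ← Finset.filter_filter, ← Finset.filter_filter]
  simp only [ne_eq]
  exact (Finset.card_filter_add_card_filter_not (fun M : Matrix (Fin m) (Fin m) F => M.det = 0)).symm

lemma card_rank_top (m : ℕ) :
    Fintype.card {M : Matrix (Fin m) (Fin m) F // M.IsSymm ∧ M.rank = m}
      = Fintype.card {M : Matrix (Fin m) (Fin m) F // M.IsSymm ∧ M.det ≠ 0} := by
  classical
  exact Fintype.card_congr (Equiv.subtypeEquivRight fun M =>
    and_congr_right fun _ => rank_eq_iff_det M)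
lemma card_inj_cast {m r : ℕ} (h : r ≤ m) :
    (Fintype.card {B : Matrix (Fin m) (Fin r) F // Function.Injective B.mulVecLin} : ℤ)
      = (ipoly m r).eval (Fintype.card F : ℤ) := by
  rw [card_inj_matrices h, ipoly, Polynomial.eval_prod, Nat.cast_prod,
    Fin.prod_univ_eq_prod_range (fun i => ((Fintype.card F ^ m - Fintype.card F ^ i : ℕ) : ℤ)) r]
  refine Finset.prod_congr rfl fun i hi => ?_
  have hle : Fintype.card F ^ i ≤ Fintype.card F ^ m :=
    Nat.pow_le_pow_right Fintype.card_pos (le_trans (le_of_lt (Finset.mem_range.mp hi)) h)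
  rw [Nat.cast_sub hle]
  simp

lemma card_inj_ne_zero (r : ℕ) :
    (Fintype.card {A : Matrix (Fin r) (Fin r) F // Function.Injective A.mulVecLin} : ℤ) ≠ 0 := by
  have : Nonempty {A : Matrix (Fin r) (Fin r) F // Function.Injective A.mulVecLin} :=
    ⟨⟨1, by rw [Matrix.mulVecLin_one]; exact fun a b h => h⟩⟩
  exact_mod_cast Fintype.card_pos.ne'

lemma card_rank_eq {m r : ℕ} (hr : r ≤ m) :
    (Fintype.card {M : Matrix (Fin m) (Fin m) F // M.IsSymm ∧ M.rank = r} : ℤ)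
      = (gbin m r).eval (Fintype.card F : ℤ)
        * (Fintype.card {S : Matrix (Fin r) (Fin r) F // S.IsSymm ∧ S.det ≠ 0} : ℤ) := by
  have hZ : (Fintype.card {B : Matrix (Fin m) (Fin r) F // Function.Injective B.mulVecLin} : ℤ) *
      (Fintype.card {S : Matrix (Fin r) (Fin r) F // S.IsSymm ∧ S.det ≠ 0} : ℤ)
      = (Fintype.card {M : Matrix (Fin m) (Fin m) F // M.IsSymm ∧ M.rank = r} : ℤ) *
      (Fintype.card {A : Matrix (Fin r) (Fin r) F // Function.Injective A.mulVecLin} : ℤ) := by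
    exact_mod_cast key_count (F := F) m r
  rw [card_inj_cast hr, card_inj_cast (le_refl r)] at hZ
  have hg : (gbin m r).eval (Fintype.card F : ℤ) * (ipoly r r).eval (Fintype.card F : ℤ)
      = (ipoly m r).eval (Fintype.card F : ℤ) := by
    rw [← Polynomial.eval_mul, gbin_mul_ipoly]
  have hne : (ipoly r r).eval (Fintype.card F : ℤ) ≠ 0 := by
    rw [← card_inj_cast (le_refl r)]; exact card_inj_ne_zero r
  apply mul_right_cancel₀ hne
  calc (Fintype.card {M : Matrix (Fin m) (Fin m) F // M.IsSymm ∧ M.rank = r} : ℤ) *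
      (ipoly r r).eval (Fintype.card F : ℤ)
      = (ipoly m r).eval (Fintype.card F : ℤ) *
        (Fintype.card {S : Matrix (Fin r) (Fin r) F // S.IsSymm ∧ S.det ≠ 0} : ℤ) := hZ.symm
  _ = ((gbin m r).eval (Fintype.card F : ℤ) * (ipoly r r).eval (Fintype.card F : ℤ)) *
        (Fintype.card {S : Matrix (Fin r) (Fin r) F // S.IsSymm ∧ S.det ≠ 0} : ℤ) := by
      rw [hg]
  _ = _ := by ring
noncomputable def nuP : ℕ → Polynomial ℤ
  | m => X ^ Nat.choose (m + 1) 2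
      - ∑ r ∈ (Finset.range m).attach, gbin m r.1 * nuP r.1
  decreasing_by exact Finset.mem_range.mp r.2

lemma card_invsymm : ∀ (m : ℕ) (F : Type) [Field F] [Fintype F],
    (Fintype.card {S : Matrix (Fin m) (Fin m) F // S.IsSymm ∧ S.det ≠ 0} : ℤ)
      = (nuP m).eval (Fintype.card F : ℤ) := by
  intro m
  induction m using Nat.strong_induction_on with
  | _ m ih =>
    intro F _ _
    have hQ : ((Fintype.card F : ℤ) ^ Nat.choose (m + 1) 2)
        = ∑ r ∈ Finset.range (m + 1),
            (Fintype.card {M : Matrix (Fin m) (Fin m) F // M.IsSymm ∧ M.rank = r} : ℤ) := by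
      have h1 : Fintype.card F ^ Nat.choose (m + 1) 2
          = ∑ r ∈ Finset.range (m + 1),
              Fintype.card {M : Matrix (Fin m) (Fin m) F // M.IsSymm ∧ M.rank = r} := by
        rw [← card_symm m, card_symm_partition m]
      exact_mod_cast congrArg (Nat.cast : ℕ → ℤ) h1
    rw [Finset.sum_range_succ] at hQ
    have hlast : (Fintype.card {M : Matrix (Fin m) (Fin m) F // M.IsSymm ∧ M.rank = m} : ℤ)
        = (Fintype.card {S : Matrix (Fin m) (Fin m) F // S.IsSymm ∧ S.det ≠ 0} : ℤ) := by
      exact_mod_cast congrArg (Nat.cast : ℕ → ℤ) (card_rank_top m)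
    have hsum : ∀ r ∈ Finset.range m,
        (Fintype.card {M : Matrix (Fin m) (Fin m) F // M.IsSymm ∧ M.rank = r} : ℤ)
          = (gbin m r * nuP r).eval (Fintype.card F : ℤ) := by
      intro r hrr
      rw [card_rank_eq (le_of_lt (Finset.mem_range.mp hrr)),
        ih r (Finset.mem_range.mp hrr) F, Polynomial.eval_mul]
    rw [Finset.sum_congr rfl hsum, hlast] at hQ
    rw [nuP]
    rw [Polynomial.eval_sub, Polynomial.eval_pow, Polynomial.eval_X, Polynomial.eval_finset_sum]
    have hattach : ∑ r ∈ (Finset.range m).attach, (gbin m r.1 * nuP r.1).eval (Fintype.card F : ℤ)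
        = ∑ r ∈ Finset.range m, (gbin m r * nuP r).eval (Fintype.card F : ℤ) :=
      Finset.sum_attach (Finset.range m) (fun r => (gbin m r * nuP r).eval (Fintype.card F : ℤ))
    rw [hattach]
    linarith [hQ]

theorem card_singular_symmetric_matrices_is_polynomial_in_q (n : ℕ) (hn : 3 ≤ n) :
    ∃ P : Polynomial ℤ,
      ∀ (F : Type) [Field F] [Fintype F],
        (Fintype.card {M : Matrix (Fin (n - 1)) (Fin (n - 1)) F // M.IsSymm ∧ M.det = 0} : ℤ)
          = P.eval (Fintype.card F : ℤ) := by
  refine ⟨X ^ Nat.choose (n - 1 + 1) 2 - nuP (n - 1), ?_⟩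
  intro F _ _
  have hsplit := card_symm_det_split (F := F) (n - 1)
  have htot := card_symm (F := F) (n - 1)
  have hN := card_invsymm (n - 1) F
  rw [Polynomial.eval_sub, Polynomial.eval_pow, Polynomial.eval_X, ← hN]
  have : (Fintype.card {M : Matrix (Fin (n-1)) (Fin (n-1)) F // M.IsSymm ∧ M.det = 0} : ℤ)
      + (Fintype.card {M : Matrix (Fin (n-1)) (Fin (n-1)) F // M.IsSymm ∧ M.det ≠ 0} : ℤ)
      = (Fintype.card F : ℤ) ^ Nat.choose (n - 1 + 1) 2 := by
    rw [htot] at hsplit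
    exact_mod_cast hsplit.symm
  linarith [this]
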